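/- Operators with bounded local dependence are uniformly bounded (abstract form of the claim that a fixed point whose recursion variable occurs only quantifier-free is trivially bounded): let B be a type, F : Set B → Set B monotone, T : B → Finset B, and N a natural number such that (i) for all b and all P ⊆ B, b ∈ F(P) if and only if b ∈ F(P ∩ T(b)); (ii) for all b and all c ∈ T(b), T(c) ⊆ T(b); and (iii) |T(b)| ≤ N for all b. Then F^{N+1}(∅) equals the least fixed point of F; in particular the closure ordinal of F is at most N+1. -/

import Mathlib

open OrdinalApprox

universe u

/-- The closure ordinal of a monotone operator: the least ordinal `γ` with
`F^{γ+1}(∅) = F^γ(∅)`. -/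
noncomputable def closureOrdinal {A : Type u} (F : Set A →o Set A) : Ordinal.{u} :=
  sInf { γ : Ordinal.{u} | lfpApprox F ⊥ (γ + 1) = lfpApprox F ⊥ γ }

private lemma lfpApprox_zero' {α : Type u} [CompleteLattice α] (f : α →o α) (x : α) :
    lfpApprox f x 0 = x := by
  apply le_antisymm _ (le_lfpApprox (f := f) (x := x))
  exact (lfpApprox_zero (f := f) (x := x)).le

/-- **Operators with bounded local dependence are uniformly bounded.** If membership of `b` in
`F(P)` only depends on `P ∩ T(b)`, the finite sets `T(b)` are transitively closed under `T`,
and `|T(b)| ≤ N` for all `b`, then the `(N+1)`-st iterate of `F` on `∅` is already the least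
fixed point; in particular the closure ordinal of `F` is at most `N + 1`. -/
theorem bounded_local_dependence {B : Type u} (F : Set B → Set B) (hF : Monotone F)
    (T : B → Finset B) (N : ℕ)
    (hloc : ∀ (b : B) (P : Set B), b ∈ F P ↔ b ∈ F (P ∩ (T b : Set B)))
    (htrans : ∀ b : B, ∀ c ∈ T b, (T c : Set B) ⊆ (T b : Set B))
    (hcard : ∀ b : B, (T b).card ≤ N) :
    F^[N + 1] ∅ = OrderHom.lfp ⟨F, hF⟩ ∧
    closureOrdinal ⟨F, hF⟩ ≤ (N : Ordinal.{u}) + 1 := by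
  classical
  -- the iterates form an increasing chain
  have hchain : ∀ n, F^[n] ∅ ⊆ F^[n + 1] ∅ := by
    intro n
    induction n with
    | zero => simp
    | succ n ih =>
      rw [Function.iterate_succ_apply', Function.iterate_succ_apply']
      exact hF ih
  -- once the trace of a `T`-closed finset stabilizes, it stays stable
  have hstep : ∀ (S : Finset B), (∀ c ∈ S, (T c : Set B) ⊆ (S : Set B)) →
      ∀ k, F^[k + 1] ∅ ∩ (S : Set B) = F^[k] ∅ ∩ (S : Set B) →
      ∀ m, k ≤ m → F^[m] ∅ ∩ (S : Set B) = F^[k] ∅ ∩ (S : Set B) := by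
    intro S hS k hk m hm
    induction m with
    | zero =>
      obtain rfl : k = 0 := Nat.le_zero.mp hm
      rfl
    | succ m ih =>
      rcases Nat.lt_or_ge k (m + 1) with h | h
      · have hkm : k ≤ m := Nat.lt_succ_iff.mp h
        have hm' := ih hkm
        have key : ∀ c ∈ S, (c ∈ F^[m + 1] ∅ ↔ c ∈ F^[k + 1] ∅) := by
          intro c hc
          rw [Function.iterate_succ_apply', Function.iterate_succ_apply',
            hloc c (F^[m] ∅), hloc c (F^[k] ∅)]
          have hTc : (T c : Set B) ⊆ (S : Set B) := hS c hc
          have heq : F^[m] ∅ ∩ (T c : Set B) = F^[k] ∅ ∩ (T c : Set B) := by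
            ext x
            constructor <;> rintro ⟨hx1, hx2⟩
            · have hx : x ∈ F^[k] ∅ ∩ (S : Set B) := hm' ▸ ⟨hx1, hTc hx2⟩
              exact ⟨hx.1, hx2⟩
            · have hx : x ∈ F^[m] ∅ ∩ (S : Set B) := hm'.symm ▸ ⟨hx1, hTc hx2⟩
              exact ⟨hx.1, hx2⟩
          rw [heq]
        ext c
        constructor <;> rintro ⟨h1, h2⟩
        · have : c ∈ F^[k + 1] ∅ ∩ (S : Set B) := ⟨(key c h2).mp h1, h2⟩
          exact hk ▸ this
        · have : c ∈ F^[k + 1] ∅ ∩ (S : Set B) := hk.symm ▸ (⟨h1, h2⟩ : c ∈ F^[k] ∅ ∩ (S : Set B))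
          exact ⟨(key c h2).mpr this.1, h2⟩
      · obtain rfl : k = m + 1 := le_antisymm hm h
        rfl
  -- pigeonhole: the trace of `T b` stabilizes at some stage `k ≤ N`
  have hpig : ∀ b : B, ∃ k ≤ N, F^[k + 1] ∅ ∩ ((T b : Finset B) : Set B)
      = F^[k] ∅ ∩ ((T b : Finset B) : Set B) := by
    intro b
    by_contra hcon
    push_neg at hcon
    set g : ℕ → Finset B := fun k => (T b).filter (· ∈ F^[k] ∅) with hg
    have hgsub : ∀ k, g k ⊆ g (k + 1) := by
      intro k
      intro x hx
      simp only [hg, Finset.mem_filter] at hx ⊢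
      exact ⟨hx.1, hchain k hx.2⟩
    have hgrow : ∀ k ≤ N + 1, k ≤ (g k).card := by
      intro k
      induction k with
      | zero => intro _; exact Nat.zero_le _
      | succ k ih =>
        intro hk
        have hkN : k ≤ N := by omega
        have hne : g k ≠ g (k + 1) := by
          intro hgeq
          apply hcon k hkN
          ext x
          simp only [Set.mem_inter_iff, Finset.coe_filter, Finset.mem_coe]
          constructor <;> rintro ⟨h1, h2⟩
          · have hx : x ∈ g (k + 1) := Finset.mem_filter.mpr ⟨h2, h1⟩
            rw [← hgeq] at hx
            exact ⟨(Finset.mem_filter.mp hx).2, h2⟩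
          · have hx : x ∈ g k := Finset.mem_filter.mpr ⟨h2, h1⟩
            rw [hgeq] at hx
            exact ⟨(Finset.mem_filter.mp hx).2, h2⟩
        have hlt : (g k).card < (g (k + 1)).card :=
          Finset.card_lt_card (Finset.ssubset_iff_subset_ne.mpr ⟨hgsub k, hne⟩)
        have := ih (by omega)
        omega
    have h1 : N + 1 ≤ (g (N + 1)).card := hgrow (N + 1) le_rfl
    have h2 : (g (N + 1)).card ≤ (T b).card := Finset.card_le_card (Finset.filter_subset _ _)
    have := hcard b
    omega
  -- hence every trace is stable from stage `N` on
  have hTstab : ∀ b : B, F^[N + 1] ∅ ∩ ((T b : Finset B) : Set B)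
      = F^[N] ∅ ∩ ((T b : Finset B) : Set B) := by
    intro b
    obtain ⟨k, hkN, hk⟩ := hpig b
    have hS : ∀ c ∈ T b, (T c : Set B) ⊆ ((T b : Finset B) : Set B) := htrans b
    have h1 := hstep (T b) hS k hk (N + 1) (by omega)
    have h2 := hstep (T b) hS k hk N hkN
    rw [h1, h2]
  -- the iteration is stationary at stage `N + 1`
  have hfix : F^[N + 1 + 1] ∅ = F^[N + 1] ∅ := by
    ext b
    rw [Function.iterate_succ_apply' F (N + 1), hloc b (F^[N + 1] ∅), hTstab b,
      ← hloc b (F^[N] ∅), ← Function.iterate_succ_apply' F N]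
  have hfp : F (F^[N + 1] ∅) = F^[N + 1] ∅ := by
    rw [← Function.iterate_succ_apply' F (N + 1) ∅]
    exact hfix
  -- every iterate is below the least fixed point
  have hle : ∀ n, F^[n] ∅ ⊆ OrderHom.lfp ⟨F, hF⟩ := by
    intro n
    induction n with
    | zero => simp
    | succ n ih =>
      rw [Function.iterate_succ_apply']
      calc F (F^[n] ∅) ⊆ F (OrderHom.lfp ⟨F, hF⟩) := hF ih
        _ = OrderHom.lfp ⟨F, hF⟩ := OrderHom.map_lfp ⟨F, hF⟩
  have heq : F^[N + 1] ∅ = OrderHom.lfp ⟨F, hF⟩ :=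
    subset_antisymm (hle (N + 1)) (OrderHom.lfp_le _ (le_of_eq hfp))
  refine ⟨heq, ?_⟩
  -- the ordinal approximations agree with the iterates at natural number stages
  have happrox : ∀ n : ℕ, lfpApprox (⟨F, hF⟩ : Set B →o Set B) ⊥ (n : Ordinal.{u}) = F^[n] ∅ := by
    intro n
    induction n with
    | zero =>
      simpa using lfpApprox_zero' (⟨F, hF⟩ : Set B →o Set B) ⊥
    | succ n ih =>
      rw [Nat.cast_succ, lfpApprox_add_one _ bot_le, ih, Function.iterate_succ_apply']
      rfl
  apply csInf_le'
  show lfpApprox (⟨F, hF⟩ : Set B →o Set B) ⊥ ((N : Ordinal.{u}) + 1 + 1)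
    = lfpApprox (⟨F, hF⟩ : Set B →o Set B) ⊥ ((N : Ordinal.{u}) + 1)
  have c1 : (N : Ordinal.{u}) + 1 = ((N + 1 : ℕ) : Ordinal.{u}) := by push_cast; ring
  have c2 : (N : Ordinal.{u}) + 1 + 1 = ((N + 1 + 1 : ℕ) : Ordinal.{u}) := by push_cast; ring
  rw [c2, c1, happrox, happrox, hfix]
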